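/- Let E and V be finite sets, let h, t : E → V assign to each directed edge its head and its tail, and let Int ⊆ V be a set of internal vertices. Suppose every internal vertex v ∈ Int has exactly one incoming edge (card {e : E | h e = v} = 1) and exactly two outgoing edges (card {e : E | t e = v} = 2), every external vertex v ∉ Int is the endpoint of exactly one edge-end (card {e : E | h e = v} + card {e : E | t e = v} = 1), and the configuration satisfies the tree count card E + 1 = card V. Then exactly one edge has its tail at an external vertex: card {e : E | t e ∉ Int} = 1. -/

import Mathlib

/-- A legally directed tree diagram has exactly one leg pointing from the base loop
inwards: if every internal vertex has exactly one incoming and two outgoing edges,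
every external vertex carries exactly one edge-end, and card E + 1 = card V, then
exactly one edge has its tail at an external vertex. -/
theorem tree_one_inward_leg {E V : Type*} [Fintype E] [Fintype V] [DecidableEq V]
    (h t : E → V) (Int : Finset V)
    (hin : ∀ v ∈ Int, (Finset.univ.filter (fun e : E => h e = v)).card = 1)
    (hout : ∀ v ∈ Int, (Finset.univ.filter (fun e : E => t e = v)).card = 2)
    (hext : ∀ v : V, v ∉ Int →
      (Finset.univ.filter (fun e : E => h e = v)).card
        + (Finset.univ.filter (fun e : E => t e = v)).card = 1)
    (hTree : Fintype.card E + 1 = Fintype.card V) :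
    (Finset.univ.filter (fun e : E => t e ∉ Int)).card = 1 := by
  classical
  set A : V → ℕ := fun v => (Finset.univ.filter (fun e : E => h e = v)).card with hA
  set B : V → ℕ := fun v => (Finset.univ.filter (fun e : E => t e = v)).card with hB
  have hsumA : ∑ v : V, A v = Fintype.card E := by
    rw [← Finset.card_univ (α := E)]
    exact (Finset.card_eq_sum_card_fiberwise (fun e _ => Finset.mem_univ (h e))).symm
  have hsumB : ∑ v : V, B v = Fintype.card E := by
    rw [← Finset.card_univ (α := E)]
    exact (Finset.card_eq_sum_card_fiberwise (fun e _ => Finset.mem_univ (t e))).symm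
  -- split over Int
  have hsplitA : ∑ v : V, A v = ∑ v ∈ Int, A v + ∑ v ∈ Intᶜ, A v :=
    (Finset.sum_add_sum_compl Int A).symm
  have hsplitB : ∑ v : V, B v = ∑ v ∈ Int, B v + ∑ v ∈ Intᶜ, B v :=
    (Finset.sum_add_sum_compl Int B).symm
  have hAInt : ∑ v ∈ Int, A v = Int.card := by
    rw [Finset.sum_congr rfl hin]; simp
  have hBInt : ∑ v ∈ Int, B v = 2 * Int.card := by
    rw [Finset.sum_congr rfl hout]; simp [mul_comm]
  have hExtSum : ∑ v ∈ Intᶜ, (A v + B v) = Intᶜ.card := by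
    rw [Finset.sum_congr rfl (fun v hv => hext v (by simpa using hv))]; simp
  have hcompl : Intᶜ.card = Fintype.card V - Int.card := by
    simp [Finset.card_compl]
  have hle : Int.card ≤ Fintype.card V := Finset.card_le_card (Finset.subset_univ _)
  have hsum2 : ∑ v ∈ Intᶜ, A v + ∑ v ∈ Intᶜ, B v = Intᶜ.card := by
    rw [← Finset.sum_add_distrib]; exact hExtSum
  -- count of target
  have htarget : (Finset.univ.filter (fun e : E => t e ∈ Int)).card = ∑ v ∈ Int, B v := by
    rw [Finset.card_eq_sum_card_fiberwise
      (s := Finset.univ.filter (fun e : E => t e ∈ Int)) (f := t) (t := Int) (fun e he => (Finset.mem_filter.mp he).2)]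
    refine Finset.sum_congr rfl fun v hv => ?_
    congr 1
    ext e
    simp only [Finset.mem_filter, Finset.mem_univ, true_and]
    exact ⟨fun ⟨_, h2⟩ => h2, fun h2 => ⟨h2 ▸ hv, h2⟩⟩
  have hpart : (Finset.univ.filter (fun e : E => t e ∉ Int)).card
      + (Finset.univ.filter (fun e : E => t e ∈ Int)).card = Fintype.card E := by
    rw [add_comm, ← Finset.card_univ (α := E)]
    exact Finset.card_filter_add_card_filter_not _
  omega
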